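/- (Iterated affine recursion bound) Let ψ_n : [0,T] → [0,∞) be measurable bounded functions satisfying ψ_{n+1}(t) ≤ c₁ + c₂ ψ_n(t) + c₃ ∫₀ᵗ ψ_n(u) du for all n and t ∈ [0,T], where c₁, c₃ ≥ 0 and 0 ≤ c₂ < 1. If ψ_0 is bounded, then sup_n sup_{t∈[0,T]} ψ_n(t) < ∞. -/

import Mathlib

open Set

/-- (Iterated affine recursion bound) Let ψ_n : [0,T] → [0,∞) be measurable bounded
functions with ψ_{n+1}(t) ≤ c₁ + c₂ ψ_n(t) + c₃ ∫₀ᵗ ψ_n(u) du on [0,T], where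
c₁, c₃ ≥ 0 and 0 ≤ c₂ < 1. If ψ_0 is bounded then sup_n sup_{[0,T]} ψ_n < ∞. -/
theorem iterated_affine_recursion_bound (T c₁ c₂ c₃ : ℝ) (hT : 0 < T)
    (hc₁ : 0 ≤ c₁) (hc₂0 : 0 ≤ c₂) (hc₂1 : c₂ < 1) (hc₃ : 0 ≤ c₃)
    (ψ : ℕ → ℝ → ℝ)
    (hmeas : ∀ n, Measurable (ψ n))
    (hpos : ∀ n, ∀ t ∈ Icc 0 T, 0 ≤ ψ n t)
    (hbdd : ∀ n, ∃ B : ℝ, ∀ t ∈ Icc 0 T, ψ n t ≤ B)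
    (hrec : ∀ n : ℕ, ∀ t ∈ Icc 0 T,
      ψ (n + 1) t ≤ c₁ + c₂ * ψ n t + c₃ * ∫ u in (0:ℝ)..t, ψ n u) :
    ∃ M : ℝ, ∀ n : ℕ, ∀ t ∈ Icc 0 T, ψ n t ≤ M := by
  have h1c₂ : (0:ℝ) < 1 - c₂ := by linarith
  obtain ⟨L, hLpos, hc₃L⟩ : ∃ L : ℝ, 0 < L ∧ c₃ ≤ L * (1 - c₂) / 2 := by
    refine ⟨2 * c₃ / (1 - c₂) + 1, by positivity, ?_⟩
    have h : (2 * c₃ / (1 - c₂) + 1) * (1 - c₂) = 2 * c₃ + (1 - c₂) := by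
      field_simp
    nlinarith
  obtain ⟨B₀, hB₀⟩ := hbdd 0
  obtain ⟨C, hC0, hCB₀, hCc₁⟩ :
      ∃ C : ℝ, 0 ≤ C ∧ B₀ ≤ C ∧ c₁ ≤ (1 - c₂) / 2 * C := by
    refine ⟨max (max B₀ 0) (2 * c₁ / (1 - c₂)),
      le_trans (le_max_right B₀ 0) (le_max_left _ _),
      le_trans (le_max_left B₀ 0) (le_max_left _ _), ?_⟩
    have h2 : 2 * c₁ / (1 - c₂) ≤ max (max B₀ 0) (2 * c₁ / (1 - c₂)) := le_max_right _ _
    rw [div_le_iff₀ h1c₂] at h2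
    nlinarith
  -- Main induction: ψ n t ≤ C * exp (L * t) on [0, T].
  have key : ∀ n : ℕ, ∀ t ∈ Icc (0:ℝ) T, ψ n t ≤ C * Real.exp (L * t) := by
    intro n
    induction n with
    | zero =>
      intro t ht
      have hexp : (1:ℝ) ≤ Real.exp (L * t) :=
        Real.one_le_exp (mul_nonneg hLpos.le ht.1)
      calc ψ 0 t ≤ B₀ := hB₀ t ht
        _ ≤ C := hCB₀
        _ = C * 1 := (mul_one C).symm
        _ ≤ C * Real.exp (L * t) := by nlinarith
    | succ n ih =>
      intro t ht
      have ht0 : (0:ℝ) ≤ t := ht.1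
      have htT : t ≤ T := ht.2
      obtain ⟨Bn, hBn⟩ := hbdd n
      -- interval integrability of ψ n on [0, t]
      have hsub : Set.uIoc (0:ℝ) t ⊆ Icc 0 T := by
        rw [uIoc_of_le ht0]
        exact fun u hu => ⟨hu.1.le, hu.2.trans htT⟩
      have hint : IntervalIntegrable (ψ n) MeasureTheory.volume 0 t := by
        refine (intervalIntegrable_const (c := |Bn|)).mono_fun
          (hmeas n).aestronglyMeasurable ?_
        refine (MeasureTheory.ae_restrict_iff' measurableSet_uIoc).mpr ?_
        refine MeasureTheory.ae_of_all _ fun u hu => ?_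
        have huT := hsub hu
        have h1 := hpos n u huT
        have h2 := hBn u huT
        simp only [Real.norm_eq_abs, abs_abs]
        rw [abs_of_nonneg h1]
        exact h2.trans (le_abs_self Bn)
      have hint2 : IntervalIntegrable (fun u => C * Real.exp (L * u))
          MeasureTheory.volume 0 t :=
        (Continuous.intervalIntegrable (by continuity) 0 t)
      -- compare integrals
      have hmono : (∫ u in (0:ℝ)..t, ψ n u) ≤ ∫ u in (0:ℝ)..t, C * Real.exp (L * u) := by
        refine intervalIntegral.integral_mono_on ht0 hint hint2 fun u hu => ?_
        exact ih u ⟨hu.1, hu.2.trans htT⟩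
      -- compute the exponential integral
      have hderiv : ∀ u ∈ Icc (0:ℝ) t, HasDerivAt (fun x => C / L * Real.exp (L * x))
          (C * Real.exp (L * u)) u := by
        intro u _
        have h1 : HasDerivAt (fun x : ℝ => L * x) L u := by
          simpa using (hasDerivAt_id u).const_mul L
        have h2 : HasDerivAt (fun x => Real.exp (L * x)) (Real.exp (L * u) * L) u :=
          h1.exp
        have h3 := h2.const_mul (C / L)
        refine h3.congr_deriv ?_
        rw [mul_comm (Real.exp (L * u)) L, ← mul_assoc, div_mul_cancel₀ C hLpos.ne']
      have hval := intervalIntegral.integral_eq_sub_of_hasDerivAt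
        (fun u hu => hderiv u (by rwa [uIcc_of_le ht0] at hu)) hint2
      have hexp1 : (1:ℝ) ≤ Real.exp (L * t) := by
        rw [show (1:ℝ) = Real.exp 0 by simp]
        exact Real.exp_le_exp.mpr (mul_nonneg hLpos.le ht0)
      have hrecn := hrec n t ht
      have hihn := ih t ht
      set E := Real.exp (L * t) with hE
      have hIle : (∫ u in (0:ℝ)..t, ψ n u) ≤ C / L * E - C / L := by
        rw [hval] at hmono
        simp only [mul_zero, Real.exp_zero, mul_one] at hmono
        exact hmono
      have hIpos : (0:ℝ) ≤ ∫ u in (0:ℝ)..t, ψ n u := by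
        refine intervalIntegral.integral_nonneg ht0 fun u hu => ?_
        exact hpos n u ⟨hu.1, hu.2.trans htT⟩
      calc ψ (n+1) t ≤ c₁ + c₂ * ψ n t + c₃ * ∫ u in (0:ℝ)..t, ψ n u := hrecn
        _ ≤ c₁ + c₂ * (C * E) + c₃ * (C / L * E - C / L) := by
            have := mul_le_mul_of_nonneg_left hihn hc₂0
            have := mul_le_mul_of_nonneg_left hIle hc₃
            linarith
        _ ≤ C * E := by
            have hLne : L ≠ 0 := hLpos.ne'
            have hCL : c₃ * (C / L) ≤ (1 - c₂) / 2 * C := by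
              have h : c₃ * (C / L) = c₃ * C / L := by ring
              rw [h, div_le_iff₀ hLpos]
              nlinarith [mul_le_mul_of_nonneg_right hc₃L hC0]
            nlinarith [mul_le_mul_of_nonneg_right hCL (by linarith : (0:ℝ) ≤ E - 1)]
  exact ⟨C * Real.exp (L * T), fun n t ht =>
    (key n t ht).trans (by
      have := Real.exp_le_exp.mpr (mul_le_mul_of_nonneg_left ht.2 hLpos.le)
      nlinarith [Real.exp_pos (L * t)])⟩
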